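/- Let Y ∈ R^{n×r} with r ≥ 1 such that all eigenvalues of YᵀY lie in [1−ε, 1+ε] with 0 < ε < 1. If y is a unit vector in R^n and Y' = [y, Y], and λ is an eigenvalue of Y'ᵀY' with λ > λ_max(YᵀY), then 1 − λ + ‖Yᵀy‖²/(λ − λ_max(YᵀY)) ≥ 0. -/

import Mathlib

open Matrix

noncomputable def eigs {m : ℕ} {A : Matrix (Fin m) (Fin m) ℝ} (hA : A.IsHermitian)
    (k : Fin m) : ℝ :=
  (hA.eigenvalues ∘ Tuple.sort hA.eigenvalues) k.rev

lemma eigs_max {r : ℕ} (hr : 0 < r) {A : Matrix (Fin r) (Fin r) ℝ} (hA : A.IsHermitian)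
    (i : Fin r) : hA.eigenvalues i ≤ eigs hA ⟨0, hr⟩ := by
  set f := hA.eigenvalues
  have h1 : f i = (f ∘ Tuple.sort f) ((Tuple.sort f).symm i) := by simp
  rw [eigs, h1]
  apply Tuple.monotone_sort f
  have h2 : (⟨0, hr⟩ : Fin r) ≤ ((Tuple.sort f).symm i).rev := by
    simp [Fin.le_def]
  simpa using Fin.rev_le_rev.mpr h2

lemma spectral_dot {r : ℕ} {A : Matrix (Fin r) (Fin r) ℝ} (hA : A.IsHermitian) (u : Fin r → ℝ) :
    ∃ c : Fin r → ℝ, u ⬝ᵥ u = ∑ i, c i ^ 2 ∧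
      u ⬝ᵥ (A *ᵥ u) = ∑ i, hA.eigenvalues i * c i ^ 2 ∧
      (A *ᵥ u) ⬝ᵥ (A *ᵥ u) = ∑ i, hA.eigenvalues i ^ 2 * c i ^ 2 := by
  set U : Matrix (Fin r) (Fin r) ℝ := (hA.eigenvectorUnitary : Matrix (Fin r) (Fin r) ℝ) with hU
  set d : Fin r → ℝ := hA.eigenvalues with hd
  have hU1 : star U * U = 1 := mem_unitaryGroup_iff'.mp hA.eigenvectorUnitary.2
  have hU2 : U * star U = 1 := mem_unitaryGroup_iff.mp hA.eigenvectorUnitary.2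
  have hUT : Uᵀ * U = 1 := by
    rw [← conjTranspose_eq_transpose_of_trivial, ← star_eq_conjTranspose]; exact hU1
  have key : ∀ x z : Fin r → ℝ, (U *ᵥ x) ⬝ᵥ (U *ᵥ z) = x ⬝ᵥ z := by
    intro x z
    rw [dotProduct_mulVec, ← mulVec_transpose, mulVec_mulVec, hUT, one_mulVec]
  set c : Fin r → ℝ := star U *ᵥ u with hc
  have hu : U *ᵥ c = u := by rw [hc, mulVec_mulVec, hU2, one_mulVec]
  have hAspec : A = U * diagonal d * star U := by
    simpa using hA.spectral_theorem
  have hD : diagonal d *ᵥ c = fun i => d i * c i := by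
    ext i; rw [mulVec_diagonal]
  have hAu : A *ᵥ u = U *ᵥ (fun i => d i * c i) := by
    rw [hAspec, ← mulVec_mulVec, ← mulVec_mulVec, ← hc, hD]
  refine ⟨c, ?_, ?_, ?_⟩
  · rw [← hu, key]; simp [dotProduct, sq]
  · rw [hAu, ← hu, key]
    simp only [dotProduct]
    exact Finset.sum_congr rfl fun i _ => by ring
  · rw [hAu, key]
    simp only [dotProduct]
    exact Finset.sum_congr rfl fun i _ => by ring

theorem stmt16 {n r : ℕ} (hr : 0 < r) (Y : Matrix (Fin n) (Fin r) ℝ)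
    (ε : ℝ) (hε : ε ∈ Set.Ioo (0 : ℝ) 1)
    (hspec : ∀ μ ∈ spectrum ℝ (Yᵀ * Y), 1 - ε ≤ μ ∧ μ ≤ 1 + ε)
    (y : Fin n → ℝ) (hy : y ⬝ᵥ y = 1)
    (Y' : Matrix (Fin n) (Fin (r + 1)) ℝ)
    (hY' : Y' = Matrix.of fun i j => Fin.cases (y i) (fun k => Y i k) j)
    (lam : ℝ) (hlam : lam ∈ spectrum ℝ (Y'ᵀ * Y'))
    (hgt : eigs (Matrix.isHermitian_conjTranspose_mul_self Y) ⟨0, hr⟩ < lam) :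
    0 ≤ 1 - lam + (∑ k, ((Yᵀ *ᵥ y) k) ^ 2) /
        (lam - eigs (Matrix.isHermitian_conjTranspose_mul_self Y) ⟨0, hr⟩) := by
  have hA : (Yᵀ * Y).IsHermitian := Matrix.isHermitian_conjTranspose_mul_self Y
  set lmax := eigs (Matrix.isHermitian_conjTranspose_mul_self Y) ⟨0, hr⟩ with hlmax
  have hδ : 0 < lam - lmax := by linarith
  have hdmax : ∀ i, hA.eigenvalues i ≤ lmax := fun i => eigs_max hr hA i
  set b : Fin r → ℝ := Yᵀ *ᵥ y with hb
  set M : Matrix (Fin (r+1)) (Fin (r+1)) ℝ := Y'ᵀ * Y' with hM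
  -- eigenvector
  have hdet : (lam • (1 : Matrix (Fin (r+1)) (Fin (r+1)) ℝ) - M).det = 0 := by
    rw [spectrum.mem_iff, Algebra.algebraMap_eq_smul_one] at hlam
    by_contra h
    exact hlam ((Matrix.isUnit_iff_isUnit_det _).2 (isUnit_iff_ne_zero.2 h))
  obtain ⟨v, hvne, hv⟩ := Matrix.exists_mulVec_eq_zero_iff.mpr hdet
  have hMv : M *ᵥ v = lam • v := by
    rw [sub_mulVec, smul_mulVec, one_mulVec, sub_eq_zero] at hv
    exact hv.symm
  -- entries of M
  have hMe : ∀ j j', M j j' = ∑ i, Y' i j * Y' i j' := by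
    intro j j'; simp [hM, Matrix.mul_apply, Matrix.transpose_apply]
  have hY0 : ∀ i, Y' i (0 : Fin (r+1)) = y i := by intro i; rw [hY']; simp
  have hYs : ∀ i (k : Fin r), Y' i k.succ = Y i k := by intro i k; rw [hY']; simp
  have h00 : M 0 0 = 1 := by
    rw [hMe]; simp only [hY0]; exact hy
  have h0s : ∀ k : Fin r, M 0 k.succ = b k := by
    intro k; rw [hMe]; simp only [hY0, hYs, hb]
    simp [Matrix.mulVec, dotProduct, Matrix.transpose_apply, mul_comm]
  have hs0 : ∀ j : Fin r, M j.succ 0 = b j := by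
    intro j; rw [hMe]; simp only [hY0, hYs, hb]
    simp [Matrix.mulVec, dotProduct, Matrix.transpose_apply, mul_comm]
  have hss : ∀ j k : Fin r, M j.succ k.succ = (Yᵀ * Y) j k := by
    intro j k; rw [hMe]; simp only [hYs]
    simp [Matrix.mul_apply, Matrix.transpose_apply]
  set w : Fin r → ℝ := fun k => v k.succ with hw
  have expand : ∀ j, (M *ᵥ v) j = M j 0 * v 0 + ∑ k, M j k.succ * w k := by
    intro j
    simp [Matrix.mulVec, dotProduct, Fin.sum_univ_succ, hw]
  have hrow0 : v 0 + b ⬝ᵥ w = lam * v 0 := by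
    have h := congrFun hMv 0
    rw [expand 0] at h
    simp only [Pi.smul_apply, smul_eq_mul] at h
    rw [h00, one_mul] at h
    rw [← h]
    congr 1
    simp only [dotProduct]
    exact Finset.sum_congr rfl fun k _ => by rw [h0s]
  have hrows : ∀ k : Fin r, b k * v 0 + ((Yᵀ * Y) *ᵥ w) k = lam * w k := by
    intro k
    have h := congrFun hMv k.succ
    rw [expand k.succ] at h
    simp only [Pi.smul_apply, smul_eq_mul] at h
    rw [← h]
    congr 1
    · rw [hs0]
    · simp only [Matrix.mulVec, dotProduct]
      exact (Finset.sum_congr rfl fun j _ => by rw [hss]).symm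
  by_cases h0 : v 0 = 0
  · -- then w is an eigenvector of Yᵀ*Y with eigenvalue lam > lmax : contradiction
    exfalso
    have hwne : w ≠ 0 := by
      intro hw0
      apply hvne
      funext j
      refine Fin.cases ?_ ?_ j
      · exact h0
      · intro k; exact congrFun hw0 k
    have hAw : (Yᵀ * Y) *ᵥ w = lam • w := by
      funext k
      have h := hrows k
      rw [h0, mul_zero, zero_add] at h
      simpa using h
    obtain ⟨c, hc1, hc2, hc3⟩ := spectral_dot hA w
    have hww : 0 < w ⬝ᵥ w := by
      rcases Function.ne_iff.mp hwne with ⟨k, hk⟩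
      have hk' : w k ≠ 0 := by simpa using hk
      have hk2 : 0 < w k ^ 2 := pow_two_pos_of_ne_zero hk'
      have hle : w k ^ 2 ≤ ∑ i, w i ^ 2 :=
        Finset.single_le_sum (fun i _ => sq_nonneg (w i)) (Finset.mem_univ k)
      have : w ⬝ᵥ w = ∑ i, w i ^ 2 := by simp [dotProduct, sq]
      linarith
    have h1 : w ⬝ᵥ ((Yᵀ * Y) *ᵥ w) = lam * (w ⬝ᵥ w) := by
      rw [hAw, dotProduct_smul, smul_eq_mul]
    have h2 : w ⬝ᵥ ((Yᵀ * Y) *ᵥ w) ≤ lmax * (w ⬝ᵥ w) := by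
      rw [hc2, hc1, Finset.mul_sum]
      exact Finset.sum_le_sum fun i _ => mul_le_mul_of_nonneg_right (hdmax i) (sq_nonneg _)
    nlinarith
  · set u : Fin r → ℝ := (v 0)⁻¹ • w with hu
    have hE0 : b ⬝ᵥ u = lam - 1 := by
      rw [hu, dotProduct_smul, smul_eq_mul]
      have hbw : b ⬝ᵥ w = (lam - 1) * v 0 := by linear_combination hrow0
      rw [hbw]
      field_simp
    have hE1 : b = lam • u - (Yᵀ * Y) *ᵥ u := by
      funext k
      have hbk : b k * v 0 = lam * w k - ((Yᵀ * Y) *ᵥ w) k := by linarith [hrows k]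
      have h2 : b k = (v 0)⁻¹ * (lam * w k - ((Yᵀ * Y) *ᵥ w) k) := by
        rw [← hbk]; field_simp
      rw [hu]
      simp only [Pi.sub_apply, Pi.smul_apply, smul_eq_mul, Matrix.mulVec_smul]
      rw [h2]; ring
    obtain ⟨c, hc1, hc2, hc3⟩ := spectral_dot hA u
    set d := hA.eigenvalues with hd
    have hbu : b ⬝ᵥ u = ∑ i, (lam - d i) * c i ^ 2 := by
      have h3 : b ⬝ᵥ u = lam * (u ⬝ᵥ u) - u ⬝ᵥ ((Yᵀ * Y) *ᵥ u) := by
        rw [hE1, sub_dotProduct, smul_dotProduct, smul_eq_mul,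
          dotProduct_comm ((Yᵀ * Y) *ᵥ u) u]
      rw [h3, hc1, hc2, Finset.mul_sum, ← Finset.sum_sub_distrib]
      exact Finset.sum_congr rfl fun i _ => by ring
    have hbb : b ⬝ᵥ b = ∑ i, (lam - d i) ^ 2 * c i ^ 2 := by
      have h3 : b ⬝ᵥ b = lam * lam * (u ⬝ᵥ u) - 2 * lam * (u ⬝ᵥ ((Yᵀ * Y) *ᵥ u))
          + ((Yᵀ * Y) *ᵥ u) ⬝ᵥ ((Yᵀ * Y) *ᵥ u) := by
        rw [hE1]
        simp only [sub_dotProduct, dotProduct_sub, smul_dotProduct, dotProduct_smul,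
          smul_eq_mul, dotProduct_comm ((Yᵀ * Y) *ᵥ u) u]
        ring
      rw [h3, hc1, hc2, hc3, Finset.mul_sum, Finset.mul_sum, ← Finset.sum_sub_distrib,
        ← Finset.sum_add_distrib]
      exact Finset.sum_congr rfl fun i _ => by ring
    have hkey : (lam - lmax) * (lam - 1) ≤ b ⬝ᵥ b := by
      rw [hbb, ← hE0, hbu, Finset.mul_sum]
      refine Finset.sum_le_sum fun i _ => ?_
      have h1 : lam - lmax ≤ lam - d i := by linarith [hdmax i]
      have h2 : 0 ≤ (lam - d i) * c i ^ 2 := mul_nonneg (by linarith) (sq_nonneg _)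
      calc (lam - lmax) * ((lam - d i) * c i ^ 2)
          ≤ (lam - d i) * ((lam - d i) * c i ^ 2) := mul_le_mul_of_nonneg_right h1 h2
        _ = (lam - d i) ^ 2 * c i ^ 2 := by ring
    have hS : b ⬝ᵥ b = ∑ k, (b k) ^ 2 := by simp [dotProduct, sq]
    rw [← hS]
    have hdiv : lam - 1 ≤ b ⬝ᵥ b / (lam - lmax) :=
      (le_div_iff₀ hδ).mpr (by nlinarith [hkey])
    linarith
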